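/- The Jaccard distance d_J(A,B) = 1 − |A ∩ B|/|A ∪ B| on nonempty finite sets satisfies the triangle inequality: d_J(A,C) ≤ d_J(A,B) + d_J(B,C). -/

import Mathlib

open scoped symmDiff

private lemma jaccard_aux {m P Q R sAB sBC : ℝ} (hm : 0 ≤ m) (hP : 0 ≤ P) (hQ : 0 ≤ Q)
    (hR : 0 ≤ R) (hAC0 : 0 < m + R) (hAB0 : 0 < sAB + P) (hBC0 : 0 < sBC + Q)
    (htri : R ≤ P + Q) (h1 : sAB ≤ m + Q) (h2 : sBC ≤ m + P) :
    1 - m / (m + R) ≤ (1 - sAB / (sAB + P)) + (1 - sBC / (sBC + Q)) := by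
  have e1 : 1 - m / (m + R) = R / (m + R) := by field_simp; ring
  have e2 : 1 - sAB / (sAB + P) = P / (sAB + P) := by field_simp; ring
  have e3 : 1 - sBC / (sBC + Q) = Q / (sBC + Q) := by field_simp; ring
  rw [e1, e2, e3]
  have hmPQ : 0 < m + (P + Q) := by nlinarith
  calc R / (m + R) ≤ (P + Q) / (m + (P + Q)) := by
        rw [div_le_div_iff₀ hAC0 hmPQ]; nlinarith
    _ = P / (m + (P + Q)) + Q / (m + (P + Q)) := by ring
    _ ≤ P / (sAB + P) + Q / (sBC + Q) :=
        add_le_add (div_le_div_of_nonneg_left hP hAB0 (by linarith))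
          (div_le_div_of_nonneg_left hQ hBC0 (by linarith))

/-- The Jaccard distance `d_J(A,B) = 1 − |A ∩ B|/|A ∪ B|` satisfies the triangle
inequality on nonempty finite sets. -/
theorem jaccard_distance_triangle {α : Type*} [DecidableEq α]
    (A B C : Finset α) (hA : A.Nonempty) (hB : B.Nonempty) (hC : C.Nonempty) :
    1 - ((A ∩ C).card : ℝ) / (A ∪ C).card ≤
      (1 - ((A ∩ B).card : ℝ) / (A ∪ B).card) +
        (1 - ((B ∩ C).card : ℝ) / (B ∪ C).card) := by
  have key : ∀ X Y : Finset α, (X ∪ Y).card = (X ∩ Y).card + (X ∆ Y).card := by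
    intro X Y
    have h1 : (X ∩ Y) ∪ (X ∆ Y) = X ∪ Y := by
      ext x; simp [Finset.mem_symmDiff]; tauto
    have h2 : Disjoint (X ∩ Y) (X ∆ Y) := by
      rw [Finset.disjoint_left]; intro a ha hb
      simp [Finset.mem_symmDiff] at ha hb; tauto
    rw [← h1, Finset.card_union_of_disjoint h2]
  have htri : (A ∆ C).card ≤ (A ∆ B).card + (B ∆ C).card :=
    le_trans (Finset.card_le_card (symmDiff_triangle A B C)) (Finset.card_union_le _ _)
  have hABle : (A ∩ B).card ≤ (A ∩ C).card + (B ∆ C).card := by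
    have hsub : A ∩ B ⊆ (A ∩ C) ∪ (B ∆ C) := by
      intro x hx; simp [Finset.mem_symmDiff] at hx ⊢; tauto
    exact le_trans (Finset.card_le_card hsub) (Finset.card_union_le _ _)
  have hBCle : (B ∩ C).card ≤ (A ∩ C).card + (A ∆ B).card := by
    have hsub : B ∩ C ⊆ (A ∩ C) ∪ (A ∆ B) := by
      intro x hx; simp [Finset.mem_symmDiff] at hx ⊢; tauto
    exact le_trans (Finset.card_le_card hsub) (Finset.card_union_le _ _)
  have hAB0 : 0 < (A ∪ B).card := Finset.card_pos.2 (hA.mono Finset.subset_union_left)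
  have hBC0 : 0 < (B ∪ C).card := Finset.card_pos.2 (hB.mono Finset.subset_union_left)
  have hAC0 : 0 < (A ∪ C).card := Finset.card_pos.2 (hA.mono Finset.subset_union_left)
  rw [key A C, key A B, key B C] at *
  push_cast
  exact jaccard_aux (by positivity) (by positivity) (by positivity) (by positivity)
    (by exact_mod_cast hAC0) (by exact_mod_cast hAB0) (by exact_mod_cast hBC0)
    (by exact_mod_cast htri) (by exact_mod_cast hABle) (by exact_mod_cast hBCle)
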